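/- For every integer n ≥ 1, consider the images of the homogeneous components of p_n under the canonical ring map 𝔽₂[x_1,…,x_n] → R_n (precomposed with reduction of ℤ-coefficients mod 2). Then: the image of pol_0(p_n) is 1; the image of pol_i(p_n) is 0 for every i with 0 < i < 2^{n−1}; and the image of pol_{2^{n−1}}(p_n) equals Σ_{i=1}^{n} ε^{2^{n−1} − i} · e_i(x_1,…,x_n), where e_i denotes the i-th elementary symmetric polynomial in x_1,…,x_n. -/

import Mathlib

open MvPolynomial

/-- `Φ n x₀ x = ∏_{I ⊆ {1,…,n}} (x₀ + ∑_{i ∈ I} x i)`. -/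
def Phi {R : Type*} [CommRing R] (n : ℕ) (x0 : R) (x : ℕ → R) : R :=
  ∏ I ∈ (Finset.Icc 1 n).powerset, (x0 + ∑ i ∈ I, x i)

/-- `p_n = Φ_n(1; x₁,…,xₙ) ∈ ℤ[x₁,…,xₙ]`. -/
noncomputable def pPol (n : ℕ) : MvPolynomial ℕ ℤ :=
  Phi n 1 fun i => X i

/-- The ideal `I_m ⊆ 𝔽₂[x₁,…,x_m,ε]` generated by `x_j² − ε·x_j` for `j = 1,…,m`.
The variables are indexed by `Fin (m+1)`: index `0` is `ε` and index `j ≠ 0` is `x_j`. -/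
noncomputable def relIdeal (m : ℕ) : Ideal (MvPolynomial (Fin (m + 1)) (ZMod 2)) :=
  Ideal.span {f : MvPolynomial (Fin (m + 1)) (ZMod 2) |
    ∃ j : Fin (m + 1), j ≠ 0 ∧ f = X j ^ 2 - X 0 * X j}

/-- The ring `R_m = 𝔽₂[x₁,…,x_m,ε]/I_m`. -/
abbrev Rring (m : ℕ) := MvPolynomial (Fin (m + 1)) (ZMod 2) ⧸ relIdeal m

/-- The image of the variable `x_j` (for `1 ≤ j ≤ m`) in `R_m`. -/
noncomputable def xv (m : ℕ) (j : ℕ) : Rring m :=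
  Ideal.Quotient.mk (relIdeal m) (X (Fin.ofNat (m + 1) j))

/-- The image of the variable `ε` in `R_m`. -/
noncomputable def eps (m : ℕ) : Rring m :=
  Ideal.Quotient.mk (relIdeal m) (X 0)

/-- The canonical ring map `ℤ[x₁,…,xₙ] → R_n`: reduce the coefficients mod `2`
and send the variable `xᵢ` to (the class of) `xᵢ`. -/
noncomputable def toR (n : ℕ) : MvPolynomial ℕ ℤ →+* Rring n :=
  eval₂Hom (Int.castRingHom (Rring n)) fun i => xv n i


section KeyAlgebra
variable {R : Type*} [CommRing R]

lemma sq_add (h2 : (2 : R) = 0) (u v : R) : (u + v) ^ 2 = u ^ 2 + v ^ 2 := by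
  linear_combination (u * v) * h2

lemma pow2_add (h2 : (2 : R) = 0) (k : ℕ) (u v : R) :
    (u + v) ^ (2 ^ k) = u ^ (2 ^ k) + v ^ (2 ^ k) := by
  induction k with
  | zero => simp
  | succ k ih => rw [pow_succ, pow_mul, pow_mul, pow_mul, ih, sq_add h2]

lemma pow_of_rel {ε x : R} (hx : x ^ 2 = ε * x) :
    ∀ k, 1 ≤ k → x ^ k = ε ^ (k - 1) * x := by
  intro k hk
  induction k with
  | zero => omega
  | succ k ih =>
    rcases Nat.eq_or_lt_of_le hk with h | h
    · simp [← h]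
    · have hk1 : 1 ≤ k := by omega
      have : x ^ (k + 1) = x ^ k * x := by ring
      rw [this, ih hk1, show k + 1 - 1 = (k - 1) + 1 from by omega, pow_succ]
      linear_combination ε ^ (k - 1) * hx

lemma sum_sq (h2 : (2 : R) = 0) {ι : Type*} (s : Finset ι) (f : ι → R) :
    (∑ i ∈ s, f i) ^ 2 = ∑ i ∈ s, f i ^ 2 := by
  classical
  induction s using Finset.induction with
  | empty => simp
  | @insert a s h ih => rw [Finset.sum_insert h, Finset.sum_insert h, sq_add h2, ih]

/-- `B_s = ∑_{T ⊆ s} ε^(2^(|s|-1) - |T|) ∏_{j ∈ T} x j`. -/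
def Bpoly (ε : R) (x : ℕ → R) (s : Finset ℕ) : R :=
  ∑ T ∈ s.powerset, ε ^ (2 ^ (s.card - 1) - T.card) * ∏ j ∈ T, x j

lemma B_sq (h2 : (2 : R) = 0) (ε : R) (x : ℕ → R) (s : Finset ℕ)
    (hx : ∀ i ∈ s, x i ^ 2 = ε * x i) (hcard : s.card ≤ 2 ^ (s.card - 1)) :
    Bpoly ε x s ^ 2 = ε ^ (2 ^ (s.card - 1)) * Bpoly ε x s := by
  set q := 2 ^ (s.card - 1) with hq
  rw [Bpoly, sum_sq h2, Finset.mul_sum]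
  apply Finset.sum_congr rfl
  intro T hT
  rw [Finset.mem_powerset] at hT
  have hTq : T.card ≤ q := le_trans (Finset.card_le_card hT) hcard
  have hprod : (∏ j ∈ T, x j) ^ 2 = ε ^ T.card * ∏ j ∈ T, x j := by
    rw [← Finset.prod_pow]
    rw [Finset.prod_congr rfl fun j hj => hx j (hT hj)]
    rw [Finset.prod_mul_distrib, Finset.prod_const]
  rw [mul_pow, hprod, ← pow_mul, ← mul_assoc, ← pow_add,
    show (q - T.card) * 2 + T.card = q + (q - T.card) from by omega, pow_add, mul_assoc]

lemma phi_prod (h2 : (2 : R) = 0) (ε : R) (x : ℕ → R) :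
    ∀ (s : Finset ℕ) (hs : s.Nonempty), (∀ i ∈ s, x i ^ 2 = ε * x i) → ∀ t : R,
    ∏ I ∈ s.powerset, (t + ∑ i ∈ I, x i)
      = t ^ (2 ^ s.card) + (Bpoly ε x s + ε ^ (2 ^ (s.card - 1))) * t ^ (2 ^ (s.card - 1)) := by
  intro s hs
  induction hs using Finset.Nonempty.cons_induction with
  | singleton a =>
    intro hx t
    have hps : ({a} : Finset ℕ).powerset = {∅, {a}} := by
      ext T
      simp [Finset.mem_powerset, Finset.subset_singleton_iff]
    have hne : (∅ : Finset ℕ) ≠ {a} := (Finset.singleton_ne_empty a).symm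
    rw [hps, Finset.prod_pair hne]
    have hB : Bpoly ε x {a} = ε + x a := by
      rw [Bpoly, hps, Finset.sum_pair hne]
      simp
    rw [hB]
    simp only [Finset.card_singleton, Finset.sum_empty, Finset.sum_singleton]
    norm_num
    linear_combination (-(ε * t)) * h2
  | cons a s ha hs ih =>
    intro hx t
    have hxs : ∀ i ∈ s, x i ^ 2 = ε * x i := fun i hi => hx i (Finset.mem_cons_of_mem hi)
    have hy : x a ^ 2 = ε * x a := hx a (Finset.mem_cons_self a s)
    have hm : 1 ≤ s.card := Finset.card_pos.mpr hs
    have hq1 : 1 ≤ 2 ^ (s.card - 1) := Nat.one_le_two_pow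
    have hmq : s.card ≤ 2 ^ (s.card - 1) := by
      have := @Nat.lt_two_pow_self (s.card - 1); omega
    have hpow : 2 ^ s.card = 2 ^ (s.card - 1) * 2 := by
      rw [← pow_succ]; congr 1; omega
    have hpow4 : 2 ^ (s.card + 1) = 2 ^ (s.card - 1) * 4 := by
      rw [show s.card + 1 = s.card - 1 + 2 from by omega, pow_add]; norm_num
    have hdisj : Disjoint s.powerset (s.powerset.image (insert a)) := by
      rw [Finset.disjoint_left]
      rintro I hI hI2
      rw [Finset.mem_image] at hI2
      obtain ⟨T, hT, rfl⟩ := hI2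
      exact ha (Finset.mem_powerset.mp hI (Finset.mem_insert_self a T))
    have hinj : ∀ T1 ∈ s.powerset, ∀ T2 ∈ s.powerset, insert a T1 = insert a T2 → T1 = T2 := by
      intro T1 h1 T2 h2' h
      have ha1 : a ∉ T1 := fun hmem => ha (Finset.mem_powerset.mp h1 hmem)
      have ha2 : a ∉ T2 := fun hmem => ha (Finset.mem_powerset.mp h2' hmem)
      rw [← Finset.erase_insert ha1, ← Finset.erase_insert ha2, h]
    have hcard : (insert a s).card = s.card + 1 := Finset.card_insert_of_notMem ha
    have hBrec : Bpoly ε x (insert a s)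
        = ε ^ (2 ^ (s.card - 1)) * Bpoly ε x s
          + x a * (ε ^ (2 ^ (s.card - 1) - 1) * Bpoly ε x s) := by
      rw [Bpoly, Bpoly, Finset.powerset_insert, Finset.sum_union hdisj,
        Finset.sum_image hinj, hcard, Nat.add_sub_cancel, Finset.mul_sum, Finset.mul_sum,
        Finset.mul_sum]
      congr 1
      · refine Finset.sum_congr rfl fun T hT => ?_
        have hTm := Finset.card_le_card (Finset.mem_powerset.mp hT)
        rw [show 2 ^ s.card - T.card = 2 ^ (s.card - 1) + (2 ^ (s.card - 1) - T.card) from by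
            omega, pow_add]
        ring
      · refine Finset.sum_congr rfl fun T hT => ?_
        have haT : a ∉ T := fun hmem => ha (Finset.mem_powerset.mp hT hmem)
        have hTm := Finset.card_le_card (Finset.mem_powerset.mp hT)
        rw [Finset.card_insert_of_notMem haT, Finset.prod_insert haT,
          show 2 ^ s.card - (T.card + 1)
              = (2 ^ (s.card - 1) - 1) + (2 ^ (s.card - 1) - T.card) from by omega, pow_add]
        ring
    have hB2 : Bpoly ε x s ^ 2 = ε ^ (2 ^ (s.card - 1)) * Bpoly ε x s := B_sq h2 ε x s hxs hmq
    rw [Finset.cons_eq_insert, Finset.powerset_insert, Finset.prod_union hdisj,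
      Finset.prod_image hinj]
    have h2nd : ∏ T ∈ s.powerset, (t + ∑ i ∈ insert a T, x i)
        = ∏ T ∈ s.powerset, ((t + x a) + ∑ i ∈ T, x i) := by
      apply Finset.prod_congr rfl
      intro T hT
      rw [Finset.sum_insert (fun haT => ha (Finset.mem_powerset.mp hT haT))]
      ring
    rw [h2nd, ih hxs t, ih hxs (t + x a), hcard, Nat.add_sub_cancel, hBrec]
    rw [hpow4, hpow]
    simp only [pow_mul]
    rw [pow2_add h2 (s.card - 1) t (x a), pow_of_rel hy (2 ^ (s.card - 1)) hq1]
    have hεq : ε ^ (2 ^ (s.card - 1)) = ε ^ (2 ^ (s.card - 1) - 1) * ε := by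
      rw [← pow_succ]; congr 1; omega
    rw [hεq] at hB2 ⊢
    set u := t ^ 2 ^ (s.card - 1) with hu
    set d := ε ^ (2 ^ (s.card - 1) - 1) with hd
    set B := Bpoly ε x s with hB
    set y := x a with hyy
    linear_combination (u * y * d + u ^ 2) * hB2
      + (u * d ^ 2 * B + u * d ^ 3 * ε + u ^ 2 * d ^ 2) * hy
      + (2 * u * y * d ^ 2 * ε * B + u * y * d ^ 3 * ε ^ 2 + u ^ 2 * d * ε * B
        + u ^ 2 * y * d * B + 2 * u ^ 2 * y * d ^ 2 * ε + u ^ 3 * B + u ^ 3 * d * ε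
        + u ^ 3 * y * d) * h2

lemma Bpoly_eq (ε : R) (x : ℕ → R) (n : ℕ) :
    Bpoly ε x (Finset.Icc 1 n)
      = ε ^ (2 ^ (n - 1)) + ∑ i ∈ Finset.Icc 1 n, ε ^ (2 ^ (n - 1) - i)
          * ∑ S ∈ (Finset.Icc 1 n).powersetCard i, ∏ j ∈ S, x j := by
  have hc : (Finset.Icc 1 n).card = n := by rw [Nat.card_Icc]; omega
  rw [Bpoly, hc, Finset.sum_powerset, hc,
    show Finset.range (n + 1) = insert 0 (Finset.Icc 1 n) from by
      ext j; simp only [Finset.mem_range, Finset.mem_insert, Finset.mem_Icc]; omega,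
    Finset.sum_insert (by simp)]
  congr 1
  · simp
  · refine Finset.sum_congr rfl fun i hi => ?_
    rw [Finset.mul_sum]
    refine Finset.sum_congr rfl fun T hT => ?_
    rw [(Finset.mem_powersetCard.mp hT).2]

end KeyAlgebra

section MainProof

attribute [local instance] MvPolynomial.gradedAlgebra

/-- The map `ℤ[x_ℕ] → 𝔽₂[Fin (n+1)]`. -/
noncomputable def toP2 (n : ℕ) : MvPolynomial ℕ ℤ →+* MvPolynomial (Fin (n + 1)) (ZMod 2) :=
  (rename (fun i : ℕ => Fin.ofNat (n + 1) i)).toRingHom.comp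
    (MvPolynomial.map (Int.castRingHom (ZMod 2)))

lemma toR_eq (n : ℕ) : toR n = (Ideal.Quotient.mk (relIdeal n)).comp (toP2 n) := by
  apply MvPolynomial.ringHom_ext
  · intro a
    simp [toR, toP2, map_intCast]
  · intro i
    simp [toR, toP2, xv]

lemma two_eq_zero_R (n : ℕ) : (2 : Rring n) = 0 := by
  rw [show (2 : Rring n)
      = Ideal.Quotient.mk (relIdeal n) (2 : MvPolynomial (Fin (n + 1)) (ZMod 2)) from
        (map_ofNat _ 2).symm,
    show (2 : MvPolynomial (Fin (n + 1)) (ZMod 2)) = 0 from CharTwo.two_eq_zero, map_zero]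

lemma xv_rel (n : ℕ) (i : ℕ) (h1 : 1 ≤ i) (h2 : i ≤ n) :
    xv n i ^ 2 = eps n * xv n i := by
  rw [xv, eps, ← map_pow, ← map_mul, Ideal.Quotient.eq]
  apply Ideal.subset_span
  refine ⟨Fin.ofNat (n + 1) i, ?_, rfl⟩
  intro h0
  have hv : ((Fin.ofNat (n + 1) i : Fin (n + 1)) : ℕ) = i := Nat.mod_eq_of_lt (by omega)
  rw [h0] at hv
  simp at hv
  omega

lemma relIdeal_hom (n : ℕ) :
    (relIdeal n).IsHomogeneous (homogeneousSubmodule (Fin (n + 1)) (ZMod 2)) := by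
  apply Ideal.homogeneous_span
  rintro f ⟨j, hj, rfl⟩
  refine ⟨2, ?_⟩
  rw [mem_homogeneousSubmodule]
  have hp : ((X j : MvPolynomial (Fin (n + 1)) (ZMod 2)) ^ 2).IsHomogeneous 2 := by
    simpa using (isHomogeneous_X (ZMod 2) j).pow 2
  have hm : ((X 0 : MvPolynomial (Fin (n + 1)) (ZMod 2)) * X j).IsHomogeneous 2 := by
    simpa using (isHomogeneous_X (ZMod 2) 0).mul (isHomogeneous_X (ZMod 2) j)
  exact hp.sub hm

lemma comp_mem (n : ℕ) {h : MvPolynomial (Fin (n + 1)) (ZMod 2)} (hmem : h ∈ relIdeal n)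
    (i : ℕ) : homogeneousComponent i h ∈ relIdeal n := by
  have H := relIdeal_hom n i hmem
  have e : (DirectSum.decompose (homogeneousSubmodule (Fin (n + 1)) (ZMod 2)) h i
      : MvPolynomial (Fin (n + 1)) (ZMod 2)) = homogeneousComponent i h := by
    rw [← MvPolynomial.decomposition.decompose'_apply, DirectSum.Decomposition.decompose'_eq]
  rwa [e] at H

/-- The degree-`2^(n-1)` polynomial representing the claimed value. -/
noncomputable def Gq (n : ℕ) : MvPolynomial (Fin (n + 1)) (ZMod 2) :=
  ∑ i ∈ Finset.Icc 1 n, X 0 ^ (2 ^ (n - 1) - i)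
    * ∑ S ∈ (Finset.Icc 1 n).powersetCard i, ∏ j ∈ S, X (Fin.ofNat (n + 1) j)

lemma Gq_hom (n : ℕ) (hn : 1 ≤ n) : (Gq n).IsHomogeneous (2 ^ (n - 1)) := by
  have hnq : n ≤ 2 ^ (n - 1) := by have := @Nat.lt_two_pow_self (n - 1); omega
  apply IsHomogeneous.sum
  intro i hi
  rw [Finset.mem_Icc] at hi
  have h1 : ((X (0 : Fin (n + 1)) : MvPolynomial _ (ZMod 2))
      ^ (2 ^ (n - 1) - i)).IsHomogeneous (2 ^ (n - 1) - i) := by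
    simpa using (isHomogeneous_X (ZMod 2) (0 : Fin (n + 1))).pow (2 ^ (n - 1) - i)
  have h2 : (∑ S ∈ (Finset.Icc 1 n).powersetCard i,
      ∏ j ∈ S, (X (Fin.ofNat (n + 1) j) : MvPolynomial _ (ZMod 2))).IsHomogeneous i := by
    apply IsHomogeneous.sum
    intro S hS
    have hS2 := (Finset.mem_powersetCard.mp hS).2
    have := IsHomogeneous.prod S
      (fun j => (X (Fin.ofNat (n + 1) j) : MvPolynomial _ (ZMod 2))) (fun _ => 1)
      (fun j _ => isHomogeneous_X _ _)
    simpa [hS2] using this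
  have := h1.mul h2
  rwa [show 2 ^ (n - 1) - i + i = 2 ^ (n - 1) from by omega] at this

lemma mk_Gq (n : ℕ) :
    Ideal.Quotient.mk (relIdeal n) (Gq n)
      = ∑ i ∈ Finset.Icc 1 n, eps n ^ (2 ^ (n - 1) - i)
          * ∑ S ∈ (Finset.Icc 1 n).powersetCard i, ∏ j ∈ S, xv n j := by
  rw [Gq, map_sum]
  refine Finset.sum_congr rfl fun i hi => ?_
  rw [map_mul, map_pow, map_sum]
  congr 1
  refine Finset.sum_congr rfl fun S hS => ?_
  rw [map_prod]
  rfl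

lemma toR_pPol (n : ℕ) (hn : 1 ≤ n) :
    toR n (pPol n) = 1 + ∑ i ∈ Finset.Icc 1 n, eps n ^ (2 ^ (n - 1) - i)
          * ∑ S ∈ (Finset.Icc 1 n).powersetCard i, ∏ j ∈ S, xv n j := by
  have h2 : (2 : Rring n) = 0 := two_eq_zero_R n
  have hrel : ∀ i ∈ Finset.Icc 1 n, xv n i ^ 2 = eps n * xv n i := by
    intro i hi
    rw [Finset.mem_Icc] at hi
    exact xv_rel n i hi.1 hi.2
  have hPhi : toR n (pPol n)
      = ∏ I ∈ (Finset.Icc 1 n).powerset, ((1 : Rring n) + ∑ i ∈ I, xv n i) := by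
    rw [pPol, Phi, map_prod]
    refine Finset.prod_congr rfl fun I hI => ?_
    rw [map_add, map_sum, map_one]
    congr 1
    refine Finset.sum_congr rfl fun i hi => ?_
    simp [toR]
  have hne : (Finset.Icc 1 n).Nonempty := Finset.nonempty_Icc.mpr hn
  have hcard : (Finset.Icc 1 n).card = n := by rw [Nat.card_Icc]; omega
  have hkey := phi_prod h2 (eps n) (xv n) (Finset.Icc 1 n) hne hrel 1
  rw [hcard, Bpoly_eq (eps n) (xv n) n, one_pow, one_pow, mul_one] at hkey
  rw [hPhi, hkey]
  linear_combination (eps n ^ (2 ^ (n - 1))) * h2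

/-- For every `n ≥ 1`: the image in `R_n` of `pol₀(p_n)` is `1`; the image of
`pol_i(p_n)` is `0` for `0 < i < 2^{n−1}`; and the image of `pol_{2^{n−1}}(p_n)` is
`Σ_{i=1}^{n} ε^{2^{n−1}−i} · e_i(x₁,…,xₙ)`, where `e_i` is the `i`-th elementary
symmetric polynomial in `x₁,…,xₙ`. -/
theorem stmt13 (n : ℕ) (hn : 1 ≤ n) :
    toR n (homogeneousComponent 0 (pPol n)) = 1 ∧
    (∀ i : ℕ, 0 < i → i < 2 ^ (n - 1) → toR n (homogeneousComponent i (pPol n)) = 0) ∧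
    toR n (homogeneousComponent (2 ^ (n - 1)) (pPol n))
      = ∑ i ∈ Finset.Icc 1 n, eps n ^ (2 ^ (n - 1) - i)
          * ∑ S ∈ (Finset.Icc 1 n).powersetCard i, ∏ j ∈ S, xv n j := by
  have hq1 : 1 ≤ 2 ^ (n - 1) := Nat.one_le_two_pow
  have hI : toP2 n (pPol n) - (1 + Gq n) ∈ relIdeal n := by
    apply Ideal.Quotient.eq.mp
    have h1 : Ideal.Quotient.mk (relIdeal n) (toP2 n (pPol n)) = toR n (pPol n) := by
      rw [toR_eq]; rfl
    rw [h1, toR_pPol n hn, map_add, map_one, mk_Gq]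
  have hmemP2 : ∀ j : ℕ, toP2 n (homogeneousComponent j (pPol n))
      ∈ homogeneousSubmodule (Fin (n + 1)) (ZMod 2) j := by
    intro j
    rw [mem_homogeneousSubmodule]
    exact ((homogeneousComponent_isHomogeneous j (pPol n)).map
      (Int.castRingHom (ZMod 2))).rename_isHomogeneous
  have hL : ∀ i : ℕ, homogeneousComponent i (toP2 n (pPol n))
      = if i ∈ Finset.range ((pPol n).totalDegree + 1)
        then toP2 n (homogeneousComponent i (pPol n)) else 0 := by
    intro i
    rw [show toP2 n (pPol n) = ∑ j ∈ Finset.range ((pPol n).totalDegree + 1),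
        toP2 n (homogeneousComponent j (pPol n)) from by
      rw [← map_sum, sum_homogeneousComponent], map_sum]
    rw [Finset.sum_congr rfl fun j _ => homogeneousComponent_of_mem (hmemP2 j)]
    exact Finset.sum_ite_eq _ i _
  have hG : ∀ i : ℕ, homogeneousComponent i (1 + Gq n)
      = (if i = 0 then 1 else 0) + (if i = 2 ^ (n - 1) then Gq n else 0) := by
    intro i
    rw [map_add,
      homogeneousComponent_of_mem ((mem_homogeneousSubmodule 0 _).mpr
        (isHomogeneous_one _ _)),
      homogeneousComponent_of_mem ((mem_homogeneousSubmodule _ _).mpr (Gq_hom n hn))]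
  have key : ∀ i : ℕ, toR n (homogeneousComponent i (pPol n))
      = Ideal.Quotient.mk (relIdeal n) (homogeneousComponent i (1 + Gq n)) := by
    intro i
    have e1 : toR n (homogeneousComponent i (pPol n))
        = Ideal.Quotient.mk (relIdeal n) (toP2 n (homogeneousComponent i (pPol n))) := by
      rw [toR_eq]; rfl
    have e2 : toP2 n (homogeneousComponent i (pPol n))
        = homogeneousComponent i (toP2 n (pPol n)) := by
      rw [hL i]
      split
      · rfl
      · rename_i hnot
        have hz : homogeneousComponent i (pPol n) = 0 :=
          homogeneousComponent_eq_zero _ _ (by simp only [Finset.mem_range] at hnot; omega)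
        rw [hz, map_zero]
    rw [e1, e2,
      show homogeneousComponent i (toP2 n (pPol n))
        = homogeneousComponent i (toP2 n (pPol n) - (1 + Gq n))
          + homogeneousComponent i (1 + Gq n) from by rw [map_sub]; ring,
      map_add, Ideal.Quotient.eq_zero_iff_mem.mpr (comp_mem n hI i), zero_add]
  refine ⟨?_, ?_, ?_⟩
  · rw [key 0, hG 0, if_pos rfl, if_neg (by omega), add_zero, map_one]
  · intro i hi0 hiq
    rw [key i, hG i, if_neg (by omega), if_neg (by omega), add_zero, map_zero]
  · rw [key _, hG _, if_neg (by omega), if_pos rfl, zero_add, mk_Gq]
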